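/- Let F ∈ ℤ[x₁,…,xₙ] and y' ∈ ℤ_pⁿ a critical point of F where F − F(y') vanishes to order exactly r. Write f(x) = F(x + y') − F(y') = ∑_{i≥r} f_i with f_i zero or homogeneous of degree i over ℤ_p. Then, for the local sum at level m = r+1, one has the identity S_{y'}(F,p,r+1) = ψ(F(y')/p^{r+1}) · p^{-2n} · ∑_{v ∈ 𝔽_pⁿ} ψ_p(\bar{f_r}(v)), where ψ is the standard additive character of ℚ_p trivial on ℤ_p, ψ_p the induced nontrivial character of 𝔽_p, and \bar{f_r} the reduction of f_r mod p. -/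

import Mathlib

open MvPolynomial

/-- The local normalized exponential sum
`S_y(F,p,m) = p^{-mn} ∑_{x ∈ (ℤ/p^mℤ)ⁿ, x ≡ y mod p} exp(2πi F(x)/p^m)`. -/
noncomputable def Sloc (n p m : ℕ) [NeZero p] (F : MvPolynomial (Fin n) ℤ) (y : Fin n → ℤ) : ℂ :=
  (p : ℂ) ^ (-(m * n : ℤ)) *
    ∑ x : Fin n → ZMod (p ^ m),
      if ∀ i, (((x i).val : ZMod p) = ((y i : ZMod p))) then
        Complex.exp (2 * Real.pi * Complex.I *
          (((MvPolynomial.eval (fun i => ((x i).val : ℤ)) F : ℤ) : ℂ) / (p : ℂ) ^ m))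
      else 0

noncomputable def Epm (p m : ℕ) (a : ℤ) : ℂ :=
  Complex.exp (2 * Real.pi * Complex.I * ((a : ℂ) / (p : ℂ) ^ m))

lemma Epm_add (p m : ℕ) [NeZero p] (a b : ℤ) : Epm p m (a + b) = Epm p m a * Epm p m b := by
  rw [Epm, Epm, Epm, ← Complex.exp_add]
  congr 1
  push_cast
  ring

lemma Epm_congr (p m N : ℕ) [NeZero p] (hN : p ^ m = N) (a b : ℤ)
    (h : ((a : ZMod N)) = (b : ZMod N)) :
    Epm p m a = Epm p m b := by
  subst hN
  have hp : (p : ℂ) ≠ 0 := Nat.cast_ne_zero.mpr (NeZero.ne p)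
  have hd : ((p : ℤ) ^ m) ∣ b - a := by
    have h2 : ((p:ℤ) ^ m) = ((p ^ m : ℕ) : ℤ) := by push_cast; ring
    rw [h2]
    exact Int.ModEq.dvd ((ZMod.intCast_eq_intCast_iff a b (p ^ m)).mp h)
  obtain ⟨k, hk⟩ := hd
  have hb : b = a + (p:ℤ) ^ m * k := by linarith
  rw [hb, Epm_add, Epm]
  have h3 : Epm p m ((p:ℤ) ^ m * k) = 1 := by
    rw [Epm]
    have h4 : ((((p:ℤ) ^ m * k : ℤ) : ℂ) / (p : ℂ) ^ m) = (k : ℂ) := by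
      push_cast
      field_simp
    rw [h4, show (2 * Real.pi * Complex.I * (k:ℂ)) = (k:ℂ) * (2 * Real.pi * Complex.I) by ring,
      Complex.exp_int_mul_two_pi_mul_I]
  rw [h3, mul_one]

lemma Epm_pow_shift (p r : ℕ) [NeZero p] (a : ℤ) : Epm p (r + 1) ((p:ℤ) ^ r * a) = Epm p 1 a := by
  have hp : (p : ℂ) ≠ 0 := Nat.cast_ne_zero.mpr (NeZero.ne p)
  rw [Epm, Epm]
  congr 1
  rw [pow_succ]
  push_cast
  field_simp

lemma eval_mul_homog {n : ℕ} {φ : MvPolynomial (Fin n) ℤ} {m : ℕ}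
    (hφ : φ.IsHomogeneous m) (c : ℤ) (x : Fin n → ℤ) :
    eval (fun i => c * x i) φ = c ^ m * eval x φ := by
  rw [eval_eq, eval_eq, Finset.mul_sum]
  apply Finset.sum_congr rfl
  intro d hd
  have hdeg : ∑ i ∈ d.support, d i = m := by
    have h1 := hφ (mem_support_iff.mp hd)
    rw [← h1, Finsupp.weight_apply]
    simp [Finsupp.sum]
  calc coeff d φ * ∏ i ∈ d.support, (c * x i) ^ d i
      = coeff d φ * ((∏ i ∈ d.support, c ^ d i) * ∏ i ∈ d.support, x i ^ d i) := by
        rw [← Finset.prod_mul_distrib]; simp_rw [mul_pow]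
    _ = c ^ m * (coeff d φ * ∏ i ∈ d.support, x i ^ d i) := by
        rw [Finset.prod_pow_eq_pow_sum, hdeg]; ring

lemma eval_cast {n : ℕ} (M : ℕ) (a : Fin n → ℤ) (φ : MvPolynomial (Fin n) ℤ) :
    ((eval a φ : ℤ) : ZMod M)
      = eval (fun i => ((a i : ZMod M))) (φ.map (Int.castRingHom (ZMod M))) := by
  rw [eval_map, ← eval₂_id (g := a) φ]
  have h := eval₂_comp_left (Int.castRingHom (ZMod M)) (RingHom.id ℤ) a φ
  simp only [RingHom.comp_id] at h
  rw [show ((eval₂ (RingHom.id ℤ) a φ : ℤ) : ZMod M)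
      = (Int.castRingHom (ZMod M)) (eval₂ (RingHom.id ℤ) a φ) from rfl, h]
  rfl

lemma val_intCast_self {M : ℕ} [NeZero M] (x : ZMod M) : (((x.val : ℤ)) : ZMod M) = x := by
  push_cast
  simp [ZMod.natCast_val, ZMod.cast_id]

lemma val_int_congr {M N : ℕ} [NeZero M] (hNM : N ∣ M) (x : ZMod M) (a : ℤ)
    (h : (a : ZMod M) = x) : ((x.val : ℤ) : ZMod N) = (a : ZMod N) := by
  rw [ZMod.intCast_eq_intCast_iff]
  have h1 : ((x.val : ℤ) : ZMod M) = (a : ZMod M) := by rw [val_intCast_self, h]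
  exact Int.ModEq.of_dvd (Int.natCast_dvd_natCast.mpr hNM) ((ZMod.intCast_eq_intCast_iff _ _ _).mp h1)

lemma coord_inj {p r : ℕ} [NeZero p] (hr : 1 ≤ r)
    (a b : ZMod p) (c d : ZMod (p ^ (r - 1))) (y : ℤ)
    (h : ((y + (p:ℤ) * a.val + (p:ℤ)^2 * c.val : ℤ) : ZMod (p ^ (r+1)))
       = ((y + (p:ℤ) * b.val + (p:ℤ)^2 * d.val : ℤ) : ZMod (p ^ (r+1)))) :
    a = b ∧ c = d := by
  haveI : NeZero (p ^ (r - 1)) := NeZero.mk (pow_ne_zero _ (NeZero.ne p))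
  haveI : NeZero (p ^ (r + 1)) := NeZero.mk (pow_ne_zero _ (NeZero.ne p))
  have hp0 : (p : ℤ) ≠ 0 := Int.natCast_ne_zero.mpr (NeZero.ne p)
  have hp1 : (1 : ℤ) ≤ p := by exact_mod_cast Nat.one_le_iff_ne_zero.mpr (NeZero.ne p)
  set A : ℤ := (a.val : ℤ) + (p:ℤ) * (c.val : ℤ) with hA
  set B : ℤ := (b.val : ℤ) + (p:ℤ) * (d.val : ℤ) with hB
  have hdvd : ((p:ℤ)^(r+1)) ∣ ((y + (p:ℤ) * b.val + (p:ℤ)^2 * d.val) - (y + (p:ℤ) * a.val + (p:ℤ)^2 * c.val)) := by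
    have h1 := (ZMod.intCast_eq_intCast_iff _ _ _).mp h
    have h2 := Int.ModEq.dvd h1
    push_cast at h2
    exact h2
  have hdvd2 : ((p:ℤ)^r) ∣ B - A := by
    obtain ⟨k, hk⟩ := hdvd
    refine ⟨k, mul_left_cancel₀ hp0 ?_⟩
    have : (p:ℤ) * (B - A) = (y + (p:ℤ) * b.val + (p:ℤ)^2 * d.val) - (y + (p:ℤ) * a.val + (p:ℤ)^2 * c.val) := by
      rw [hA, hB]; ring
    rw [this, hk]
    ring
  have hav : (a.val : ℤ) < p := by exact_mod_cast a.val_lt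
  have hbv : (b.val : ℤ) < p := by exact_mod_cast b.val_lt
  have hcv : (c.val : ℤ) < (p:ℤ)^(r-1) := by exact_mod_cast (by exact_mod_cast c.val_lt : (c.val : ℤ) < ((p^(r-1) : ℕ) : ℤ))
  have hdv : (d.val : ℤ) < (p:ℤ)^(r-1) := by exact_mod_cast (by exact_mod_cast d.val_lt : (d.val : ℤ) < ((p^(r-1) : ℕ) : ℤ))
  have hav0 : (0:ℤ) ≤ a.val := Int.natCast_nonneg _
  have hbv0 : (0:ℤ) ≤ b.val := Int.natCast_nonneg _
  have hcv0 : (0:ℤ) ≤ c.val := Int.natCast_nonneg _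
  have hdv0 : (0:ℤ) ≤ d.val := Int.natCast_nonneg _
  have hpr : (p:ℤ)^r = (p:ℤ) * (p:ℤ)^(r-1) := by
    rw [← pow_succ']
    congr 1
    omega
  have hAlt : A < (p:ℤ)^r := by
    rw [hpr]
    nlinarith [mul_le_mul_of_nonneg_left (by linarith : (c.val:ℤ) ≤ (p:ℤ)^(r-1) - 1) (by linarith : (0:ℤ) ≤ p)]
  have hBlt : B < (p:ℤ)^r := by
    rw [hpr]
    nlinarith [mul_le_mul_of_nonneg_left (by linarith : (d.val:ℤ) ≤ (p:ℤ)^(r-1) - 1) (by linarith : (0:ℤ) ≤ p)]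
  have hA0 : (0:ℤ) ≤ A := by positivity
  have hB0 : (0:ℤ) ≤ B := by positivity
  have hBA : B - A = 0 := Int.eq_zero_of_abs_lt_dvd hdvd2 (abs_lt.mpr ⟨by linarith, by linarith⟩)
  have hab : (a.val : ℤ) - (b.val : ℤ) = 0 := by
    apply Int.eq_zero_of_abs_lt_dvd (m := (p:ℤ))
    · exact ⟨(d.val : ℤ) - c.val, by linarith [hBA]⟩
    · exact abs_lt.mpr ⟨by linarith, by linarith⟩
  have hcd : (c.val : ℤ) = d.val := by
    have : (p:ℤ) * (c.val : ℤ) = (p:ℤ) * d.val := by linarith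
    exact mul_left_cancel₀ hp0 this
  constructor
  · exact ZMod.val_injective p (by exact_mod_cast (by linarith : (a.val:ℤ) = b.val))
  · exact ZMod.val_injective _ (by exact_mod_cast hcd)

lemma coord_surj {p r : ℕ} [NeZero p] (hr : 1 ≤ r)
    (x : ZMod (p ^ (r + 1))) (y : ℤ)
    (h : ((x.val : ZMod p)) = (y : ZMod p)) :
    ∃ (a : ZMod p) (c : ZMod (p ^ (r - 1))),
      ((y + (p:ℤ) * a.val + (p:ℤ)^2 * c.val : ℤ) : ZMod (p ^ (r + 1))) = x := by
  haveI : NeZero (p ^ (r - 1)) := NeZero.mk (pow_ne_zero _ (NeZero.ne p))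
  haveI : NeZero (p ^ (r + 1)) := NeZero.mk (pow_ne_zero _ (NeZero.ne p))
  have hp0 : (p : ℤ) ≠ 0 := Int.natCast_ne_zero.mpr (NeZero.ne p)
  set d : ℤ := (x.val : ℤ) - y with hd
  have hpd : (p:ℤ) ∣ d := by
    rw [← ZMod.intCast_zmod_eq_zero_iff_dvd]
    rw [hd]
    push_cast
    rw [h]
    ring
  set c : ℤ := d / p with hc
  have hcd : (p:ℤ) * c = d := Int.mul_ediv_cancel' hpd
  set a : ZMod p := ((c : ℤ) : ZMod p) with ha
  have hpa : (p:ℤ) ∣ c - a.val := by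
    have h1 : (((a.val:ℤ)) : ZMod p) = ((c : ℤ) : ZMod p) := (val_intCast_self a).trans ha
    have h2 := Int.ModEq.dvd ((ZMod.intCast_eq_intCast_iff _ _ _).mp h1)
    exact_mod_cast h2
  set e : ℤ := (c - a.val) / p with he
  have hpe : (p:ℤ) * e = c - a.val := Int.mul_ediv_cancel' hpa
  set w : ZMod (p ^ (r - 1)) := ((e : ℤ) : ZMod (p ^ (r - 1))) with hw
  have hwe : ((p:ℤ)^(r-1)) ∣ e - w.val := by
    have h1 : ((w.val : ℤ) : ZMod (p ^ (r - 1))) = ((e : ℤ) : ZMod (p ^ (r - 1))) := (val_intCast_self w).trans hw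
    have h2 := Int.ModEq.dvd ((ZMod.intCast_eq_intCast_iff _ _ _).mp h1)
    push_cast at h2
    exact h2
  refine ⟨a, w, ?_⟩
  rw [← val_intCast_self x, ZMod.intCast_eq_intCast_iff]
  apply Int.ModEq.symm
  rw [Int.modEq_iff_dvd]
  obtain ⟨k, hk⟩ := hwe
  refine ⟨-k, ?_⟩
  have hsplit : ((p^(r+1) : ℕ) : ℤ) = (p:ℤ)^2 * (p:ℤ)^(r-1) := by
    push_cast
    rw [← pow_add]
    congr 1
    omega
  rw [hsplit]
  linear_combination hd + hcd + (p:ℤ) * hpe - (p:ℤ)^2 * hk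

/-- Let `y'` be a critical point of `F` at which `F − F(y')` vanishes to order exactly
`r`, and write `f(x) = F(x+y') − F(y') = ∑_{i≥r} f_i` with `f_i` homogeneous of degree
`i`. Then the local sum at level `m = r+1` satisfies
`S_{y'}(F,p,r+1) = ψ(F(y')/p^{r+1}) · p^{-2n} · ∑_{v ∈ 𝔽_pⁿ} ψ_p(f̄_r(v))`,
where `ψ_p` is the standard nontrivial additive character of `𝔽_p` and `f̄_r` is the
reduction of `f_r` mod `p`. -/
theorem stmt18 (n p r : ℕ) [NeZero p] (hp : p.Prime) (hr : 2 ≤ r)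
    (F : MvPolynomial (Fin n) ℤ) (y' : Fin n → ℤ)
    (hcrit : ∀ i, MvPolynomial.eval y' (MvPolynomial.pderiv i F) = 0)
    (f : MvPolynomial (Fin n) ℤ)
    (hf : f = MvPolynomial.bind₁
        (fun i => MvPolynomial.X i + MvPolynomial.C (y' i)) F -
      MvPolynomial.C (MvPolynomial.eval y' F))
    (hlow : ∀ i < r, MvPolynomial.homogeneousComponent i f = 0)
    (hfr : MvPolynomial.homogeneousComponent r f ≠ 0) :
    Sloc n p (r + 1) F y' =
      Complex.exp (2 * Real.pi * Complex.I *
          (((MvPolynomial.eval y' F : ℤ) : ℂ) / (p : ℂ) ^ (r + 1))) *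
        (p : ℂ) ^ (-(2 * n : ℤ)) *
        ∑ v : Fin n → ZMod p,
          Complex.exp (2 * Real.pi * Complex.I *
            (((MvPolynomial.eval v
                ((MvPolynomial.homogeneousComponent r f).map
                  (Int.castRingHom (ZMod p)))).val : ℂ) / (p : ℂ))) := by
  classical
  have hp0 : (p : ℤ) ≠ 0 := Int.natCast_ne_zero.mpr (NeZero.ne p)
  have hpC : (p : ℂ) ≠ 0 := Nat.cast_ne_zero.mpr (NeZero.ne p)
  haveI hM : NeZero (p ^ (r + 1)) := NeZero.mk (pow_ne_zero _ (NeZero.ne p))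
  haveI hW : NeZero (p ^ (r - 1)) := NeZero.mk (pow_ne_zero _ (NeZero.ne p))
  set M := p ^ (r + 1) with hMdef
  -- the reduced form
  set fr := MvPolynomial.homogeneousComponent r f with hfrdef
  set frbar := fr.map (Int.castRingHom (ZMod p)) with hfrbar
  -- the summand
  set g : (Fin n → ZMod M) → ℂ := fun x => Epm p (r + 1) (eval (fun i => ((x i).val : ℤ)) F)
    with hg
  -- the parametrization
  set u : ((Fin n → ZMod p) × (Fin n → ZMod (p ^ (r - 1)))) → (Fin n → ZMod M) :=
    fun vw i => (((y' i + (p:ℤ) * ((vw.1 i).val : ℤ) + (p:ℤ)^2 * ((vw.2 i).val : ℤ)) : ℤ) : ZMod M)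
    with hu
  -- term value
  have hterm : ∀ vw, g (u vw) = Epm p (r + 1) (eval y' F) * Epm p 1 (((eval vw.1 frbar).val : ℤ)) := by
    intro vw
    set s : Fin n → ℤ := fun i => ((vw.1 i).val : ℤ) + (p:ℤ) * ((vw.2 i).val : ℤ) with hs
    have hA : ((eval (fun i => ((u vw i).val : ℤ)) F : ℤ) : ZMod M)
        = ((eval (fun i => y' i + (p:ℤ) * s i) F : ℤ) : ZMod M) := by
      rw [eval_cast, eval_cast]
      have hpts : (fun i => (((u vw i).val : ℤ) : ZMod M))
          = (fun i => ((y' i + (p:ℤ) * s i : ℤ) : ZMod M)) := by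
        funext i
        have h1 : (((u vw i).val : ℤ) : ZMod M) = u vw i := val_intCast_self _
        rw [h1]
        show ((y' i + (p:ℤ) * ((vw.1 i).val : ℤ) + (p:ℤ)^2 * ((vw.2 i).val : ℤ) : ℤ) : ZMod M) = _
        congr 1
        rw [hs]
        ring
      rw [hpts]
    have hBf : ∀ t : Fin n → ℤ, eval t f = eval (fun i => t i + y' i) F - eval y' F := by
      intro t
      rw [hf, map_sub, eval_C]
      congr 1
      rw [show (eval t) ((bind₁ (fun i => X i + C (y' i))) F)
          = eval₂Hom (RingHom.id ℤ) t ((bind₁ (fun i => X i + C (y' i))) F) from rfl,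
        eval₂Hom_bind₁]
      simp
    have hB : eval (fun i => y' i + (p:ℤ) * s i) F
        = eval y' F + eval (fun i => (p:ℤ) * s i) f := by
      have h1 := hBf (fun i => (p:ℤ) * s i)
      have hcomm : (fun i => (p:ℤ) * s i + y' i) = fun i => y' i + (p:ℤ) * s i := by
        funext i; ring
      rw [hcomm] at h1
      linarith
    have hC : ((eval (fun i => (p:ℤ) * s i) f : ℤ) : ZMod M)
        = (((p:ℤ)^r * eval s fr : ℤ) : ZMod M) := by
      have hsum : eval (fun i => (p:ℤ) * s i) f
          = ∑ i ∈ Finset.range (f.totalDegree + 1),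
              (p:ℤ)^i * eval s (MvPolynomial.homogeneousComponent i f) := by
        conv_lhs => rw [← sum_homogeneousComponent f]
        rw [map_sum]
        exact Finset.sum_congr rfl fun i _ =>
          eval_mul_homog (homogeneousComponent_isHomogeneous i f) _ _
      rw [hsum]
      push_cast
      rw [Finset.sum_eq_single_of_mem r ?hmem ?hzero]
      case hmem =>
        rw [Finset.mem_range]
        by_contra hcon
        push_neg at hcon
        exact hfr (homogeneousComponent_eq_zero r f (by omega))
      case hzero =>
        intro i _ hne
        rcases lt_or_gt_of_ne hne with hlt | hgt
        · rw [hlow i hlt]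
          simp
        · have hz : (p : ZMod M)^i = 0 := by
            have h1 : (p : ZMod M)^(r+1) = 0 := by
              rw [← Nat.cast_pow]
              exact ZMod.natCast_self _
            calc (p : ZMod M)^i = (p : ZMod M)^(r+1) * (p : ZMod M)^(i - (r+1)) := by
                  rw [← pow_add]; congr 1; omega
              _ = 0 := by rw [h1, zero_mul]
          rw [hz, zero_mul]
    have hAll : ((eval (fun i => ((u vw i).val : ℤ)) F : ℤ) : ZMod M)
        = ((eval y' F + (p:ℤ)^r * eval s fr : ℤ) : ZMod M) := by
      rw [hA, hB, Int.cast_add, hC, Int.cast_add]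
    have hstep1 : g (u vw) = Epm p (r + 1) (eval y' F + (p:ℤ)^r * eval s fr) :=
      Epm_congr p (r+1) M rfl _ _ hAll
    rw [hstep1, Epm_add, Epm_pow_shift]
    congr 1
    apply Epm_congr p 1 p (pow_one p)
    have h1 : ((eval s fr : ℤ) : ZMod p) = (((eval vw.1 frbar).val : ℤ) : ZMod p) := by
      rw [eval_cast, val_intCast_self, hfrbar]
      have hpt : (fun i => ((s i : ZMod p))) = fun i => vw.1 i := by
        funext i
        rw [hs]
        push_cast
        simp [ZMod.natCast_self, ZMod.natCast_val, ZMod.cast_id]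
      rw [hpt]
    exact h1
  -- the condition set
  set P : (Fin n → ZMod M) → Prop := fun x => ∀ i, (((x i).val : ZMod p) = ((y' i : ZMod p)))
    with hP
  have hbij : ∑ vw : ((Fin n → ZMod p) × (Fin n → ZMod (p ^ (r - 1)))),
      (Epm p (r + 1) (eval y' F) * Epm p 1 (((eval vw.1 frbar).val : ℤ)))
      = ∑ x ∈ Finset.univ.filter P, g x := by
    refine Finset.sum_bij (fun vw _ => u vw) ?hmem ?hinj ?hsurj ?hh
    case hh => exact fun a _ => (hterm a).symm
    case hmem =>
      intro vw _
      rw [Finset.mem_filter]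
      refine ⟨Finset.mem_univ _, fun i => ?_⟩
      have h1 : (((u vw i).val : ℤ) : ZMod p)
          = ((y' i + (p:ℤ) * ((vw.1 i).val : ℤ) + (p:ℤ)^2 * ((vw.2 i).val : ℤ) : ℤ) : ZMod p) :=
        val_int_congr (dvd_pow_self p (by omega : r + 1 ≠ 0)) _ _ rfl
      have h2 : (((u vw i).val : ℕ) : ZMod p) = (((u vw i).val : ℤ) : ZMod p) := by
        push_cast; rfl
      rw [h2, h1]
      push_cast
      simp [ZMod.natCast_self]
    case hinj =>
      intro vw _ vw' _ heq
      have key : ∀ i, vw.1 i = vw'.1 i ∧ vw.2 i = vw'.2 i := by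
        intro i
        exact coord_inj (by omega : 1 ≤ r) _ _ _ _ (y' i) (congrFun heq i)
      exact Prod.ext (funext fun i => (key i).1) (funext fun i => (key i).2)
    case hsurj =>
      intro x hx
      rw [Finset.mem_filter] at hx
      choose a w haw using fun i => coord_surj (by omega : 1 ≤ r) (x i) (y' i) (hx.2 i)
      exact ⟨(a, w), Finset.mem_univ _, funext haw⟩
  -- assemble
  have hS : Sloc n p (r + 1) F y'
      = (p : ℂ) ^ (-((r + 1 : ℕ) * n : ℤ)) * ∑ x ∈ Finset.univ.filter P, g x := by
    rw [Sloc, ← Finset.sum_filter]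
    rfl
  rw [hS, ← hbij, Fintype.sum_prod_type]
  have hsplitv : ∀ v : Fin n → ZMod p,
      ∑ _w : Fin n → ZMod (p ^ (r - 1)),
        (Epm p (r + 1) (eval y' F) * Epm p 1 (((eval v frbar).val : ℤ)))
      = ((p : ℂ) ^ ((r - 1) * n : ℕ)) *
        (Epm p (r + 1) (eval y' F) * Epm p 1 (((eval v frbar).val : ℤ))) := by
    intro v
    rw [Finset.sum_const, nsmul_eq_mul]
    congr 1
    simp [ZMod.card]
    push_cast
    rw [← pow_mul]
  simp_rw [hsplitv]
  rw [← Finset.mul_sum, ← Finset.mul_sum]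
  have hpow : (p : ℂ) ^ (-((r + 1 : ℕ) * n : ℤ)) * (p : ℂ) ^ ((r - 1) * n : ℕ)
      = (p : ℂ) ^ (-(2 * n : ℤ)) := by
    rw [← zpow_natCast (p : ℂ) ((r - 1) * n), ← zpow_add₀ hpC]
    congr 1
    push_cast [Nat.cast_sub (by omega : 1 ≤ r)]
    ring
  rw [← mul_assoc, hpow]
  have hterm2 : ∀ v : Fin n → ZMod p,
      Epm p 1 (((eval v frbar).val : ℤ))
      = Complex.exp (2 * Real.pi * Complex.I *
          (((eval v frbar).val : ℂ) / (p : ℂ))) := by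
    intro v
    rw [Epm, pow_one]
    push_cast
    ring_nf
  have hconst : Epm p (r + 1) (eval y' F)
      = Complex.exp (2 * Real.pi * Complex.I *
          (((MvPolynomial.eval y' F : ℤ) : ℂ) / (p : ℂ) ^ (r + 1))) := rfl
  rw [hconst]
  simp_rw [hterm2]
  ring
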